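/- Let A be an n×n matrix over the nonnegative integers of block upper-triangular form A = [[N₁, X, Y],[0, P, Z],[0, 0, N₂]] with N₁ (a×a) and N₂ (c×c) nilpotent and P (b×b) a permutation matrix corresponding to a b-cycle. Then the cokernel group G = Z^n/(I−A)Z^n is infinite cyclic, generated by the class of any standard basis vector e whose index belongs to the middle (P) block; moreover any two standard basis vectors from the middle block have equal classes in G. -/

import Mathlib

open Matrix

section Aux

variable {a b c : ℕ}

private lemma sgl_top (j : Fin a) :
    (Pi.single (Sum.inl j) (1:ℤ) : Fin a ⊕ (Fin b ⊕ Fin c) → ℤ) =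
      Sum.elim (Pi.single j 1) (0 : Fin b ⊕ Fin c → ℤ) := by
  ext (k | k | k) <;> simp [Pi.single_apply]

private lemma sgl_mid (j : Fin b) :
    (Pi.single (Sum.inr (Sum.inl j)) (1:ℤ) : Fin a ⊕ (Fin b ⊕ Fin c) → ℤ) =
      Sum.elim (0 : Fin a → ℤ) (Sum.elim (Pi.single j 1) (0 : Fin c → ℤ)) := by
  ext (k | k | k) <;> simp [Pi.single_apply]

private lemma sgl_bot (j : Fin c) :
    (Pi.single (Sum.inr (Sum.inr j)) (1:ℤ) : Fin a ⊕ (Fin b ⊕ Fin c) → ℤ) =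
      Sum.elim (0 : Fin a → ℤ) (Sum.elim (0 : Fin b → ℤ) (Pi.single j 1)) := by
  ext (k | k | k) <;> simp [Pi.single_apply]

end Aux

/-- for an essentially cyclic nonnegative integer matrix in the
block form `[[N₁,X,Y],[0,P,Z],[0,0,N₂]]` (`N₁`,`N₂` nilpotent, `P` the
permutation matrix of a single cycle), the cokernel `ℤⁿ/(I−A)ℤⁿ` is infinite
cyclic, generated by the class of any middle-block standard basis vector, and
all such classes coincide. -/
theorem esscyclic_cokernel_infinite_cyclic (a b c : ℕ)
    (N₁ : Matrix (Fin a) (Fin a) ℤ) (X : Matrix (Fin a) (Fin b) ℤ)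
    (Y : Matrix (Fin a) (Fin c) ℤ) (P : Matrix (Fin b) (Fin b) ℤ)
    (Z : Matrix (Fin b) (Fin c) ℤ) (N₂ : Matrix (Fin c) (Fin c) ℤ)
    (A : Matrix (Fin a ⊕ (Fin b ⊕ Fin c)) (Fin a ⊕ (Fin b ⊕ Fin c)) ℤ)
    (hA : A = Matrix.fromBlocks N₁ (Matrix.fromCols X Y) 0
      (Matrix.fromBlocks P Z 0 N₂))
    (hnn : ∀ i j, 0 ≤ A i j)
    (hN₁ : IsNilpotent N₁) (hN₂ : IsNilpotent N₂)
    (σ : Equiv.Perm (Fin b))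
    (hP : P = Matrix.of fun i j => if σ i = j then (1 : ℤ) else 0)
    (hσ : ∀ i j : Fin b, ∃ k : ℕ, (σ ^ k) i = j) :
    (∀ i j : Fin b,
      (Submodule.Quotient.mk (Pi.single (Sum.inr (Sum.inl i)) 1) :
          (Fin a ⊕ (Fin b ⊕ Fin c) → ℤ) ⧸ LinearMap.range ((1 - A).mulVecLin)) =
        Submodule.Quotient.mk (Pi.single (Sum.inr (Sum.inl j)) 1)) ∧
    ∀ i : Fin b,
      Function.Bijective (fun k : ℤ =>
        k • (Submodule.Quotient.mk (Pi.single (Sum.inr (Sum.inl i)) 1) :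
          (Fin a ⊕ (Fin b ⊕ Fin c) → ℤ) ⧸ LinearMap.range ((1 - A).mulVecLin))) := by
  set R : Submodule ℤ (Fin a ⊕ (Fin b ⊕ Fin c) → ℤ) := LinearMap.range ((1 - A).mulVecLin) with hR
  -- inverses of 1 - N₁ and 1 - N₂
  have hu₁ : IsUnit (1 - N₁) := hN₁.isUnit_one_sub
  have hu₂ : IsUnit (1 - N₂) := hN₂.isUnit_one_sub
  obtain ⟨u₁, hu₁'⟩ := hu₁
  obtain ⟨u₂, hu₂'⟩ := hu₂
  obtain ⟨B₁, hB₁, hB₁'⟩ : ∃ B₁, (1 - N₁) * B₁ = 1 ∧ B₁ * (1 - N₁) = 1 :=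
    ⟨(↑u₁⁻¹ : Matrix (Fin a) (Fin a) ℤ), by rw [← hu₁']; exact u₁.mul_inv,
      by rw [← hu₁']; exact u₁.inv_mul⟩
  obtain ⟨B₂, hB₂, hB₂'⟩ : ∃ B₂, (1 - N₂) * B₂ = 1 ∧ B₂ * (1 - N₂) = 1 :=
    ⟨(↑u₂⁻¹ : Matrix (Fin c) (Fin c) ℤ), by rw [← hu₂']; exact u₂.mul_inv,
      by rw [← hu₂']; exact u₂.inv_mul⟩
  have hinv₁ : ∀ v : Fin a → ℤ, (1 - N₁) *ᵥ (B₁ *ᵥ v) = v := by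
    intro v; rw [mulVec_mulVec, hB₁, one_mulVec]
  have hinv₂ : ∀ v : Fin c → ℤ, (1 - N₂) *ᵥ (B₂ *ᵥ v) = v := by
    intro v; rw [mulVec_mulVec, hB₂, one_mulVec]
  -- block form of 1 - A
  have h1A : (1 : Matrix (Fin a ⊕ (Fin b ⊕ Fin c)) (Fin a ⊕ (Fin b ⊕ Fin c)) ℤ) - A =
      Matrix.fromBlocks (1 - N₁) (-(Matrix.fromCols X Y)) 0
        (Matrix.fromBlocks (1 - P) (-Z) 0 (1 - N₂)) := by
    rw [hA, sub_eq_add_neg, fromBlocks_neg, fromBlocks_neg,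
      ← (fromBlocks_one (l := Fin a) (m := Fin b ⊕ Fin c) (α := ℤ)),
      ← (fromBlocks_one (l := Fin b) (m := Fin c) (α := ℤ)),
      fromBlocks_add, fromBlocks_add]
    simp [sub_eq_add_neg]
  have hmem : ∀ v : Fin a ⊕ (Fin b ⊕ Fin c) → ℤ, (1 - A) *ᵥ v ∈ R := fun v => ⟨v, by simp [sub_mulVec]⟩
  -- the top classes vanish
  have hTop : ∀ j : Fin a,
      (Submodule.Quotient.mk (Pi.single (Sum.inl j) (1:ℤ)) :
        (Fin a ⊕ (Fin b ⊕ Fin c) → ℤ) ⧸ R) = 0 := by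
    intro j
    rw [Submodule.Quotient.mk_eq_zero]
    have key : (1 - A) *ᵥ (Sum.elim (B₁ *ᵥ Pi.single j 1) 0 : Fin a ⊕ (Fin b ⊕ Fin c) → ℤ) =
        Pi.single (Sum.inl j) (1:ℤ) := by
      rw [h1A, fromBlocks_mulVec, sgl_top]
      simp only [Sum.elim_comp_inl, Sum.elim_comp_inr, mulVec_zero, zero_mulVec,
        add_zero, zero_add, hinv₁]
    rw [← key]; exact hmem _
  -- neighbouring middle classes agree
  have hMidStep : ∀ j : Fin b,
      (Submodule.Quotient.mk (Pi.single (Sum.inr (Sum.inl (σ j))) (1:ℤ)) :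
        (Fin a ⊕ (Fin b ⊕ Fin c) → ℤ) ⧸ R) =
      Submodule.Quotient.mk (Pi.single (Sum.inr (Sum.inl j)) (1:ℤ)) := by
    intro j
    rw [Submodule.Quotient.eq]
    have key : (1 - A) *ᵥ
        (Sum.elim (B₁ *ᵥ (X *ᵥ Pi.single (σ j) 1))
          (Sum.elim (Pi.single (σ j) 1) 0) : Fin a ⊕ (Fin b ⊕ Fin c) → ℤ) =
        Pi.single (Sum.inr (Sum.inl (σ j))) (1:ℤ) -
          Pi.single (Sum.inr (Sum.inl j)) (1:ℤ) := by
      have hPcol : P *ᵥ Pi.single (σ j) 1 = Pi.single j 1 := by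
        funext i
        simp [hP, mulVec_single, Pi.single_apply, EmbeddingLike.apply_eq_iff_eq, eq_comm]
      rw [h1A, fromBlocks_mulVec]
      simp only [Sum.elim_comp_inl, Sum.elim_comp_inr]
      rw [fromBlocks_mulVec]
      simp only [Sum.elim_comp_inl, Sum.elim_comp_inr, mulVec_zero, zero_mulVec,
        add_zero, zero_add, hinv₁, neg_mulVec, fromCols_mulVec_sumElim,
        add_neg_cancel, sub_mulVec, one_mulVec, hPcol]
      ext (k | k | k) <;>
        simp [Pi.single_apply]
    rw [← key]; exact hmem _
  -- all middle classes agree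
  have hMid : ∀ i j : Fin b,
      (Submodule.Quotient.mk (Pi.single (Sum.inr (Sum.inl i)) (1:ℤ)) :
        (Fin a ⊕ (Fin b ⊕ Fin c) → ℤ) ⧸ R) =
      Submodule.Quotient.mk (Pi.single (Sum.inr (Sum.inl j)) (1:ℤ)) := by
    have key : ∀ (k : ℕ) (i : Fin b),
        (Submodule.Quotient.mk (Pi.single (Sum.inr (Sum.inl ((σ ^ k) i))) (1:ℤ)) :
          (Fin a ⊕ (Fin b ⊕ Fin c) → ℤ) ⧸ R) =
        Submodule.Quotient.mk (Pi.single (Sum.inr (Sum.inl i)) (1:ℤ)) := by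
      intro k
      induction k with
      | zero => intro i; simp
      | succ k ih =>
          intro i
          rw [pow_succ, Equiv.Perm.mul_apply]
          exact (ih (σ i)).trans (hMidStep i)
    intro i j
    obtain ⟨k, hk⟩ := hσ i j
    rw [← hk]
    exact (key k i).symm
  -- bottom classes are classes of middle-supported vectors
  have hBot : ∀ j : Fin c, ∃ m : Fin b → ℤ,
      (Submodule.Quotient.mk (Pi.single (Sum.inr (Sum.inr j)) (1:ℤ)) :
        (Fin a ⊕ (Fin b ⊕ Fin c) → ℤ) ⧸ R) =
      Submodule.Quotient.mk (Sum.elim (0 : Fin a → ℤ) (Sum.elim m (0 : Fin c → ℤ)) : Fin a ⊕ (Fin b ⊕ Fin c) → ℤ) := by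
    intro j
    refine ⟨Z *ᵥ (B₂ *ᵥ Pi.single j 1), ?_⟩
    rw [Submodule.Quotient.eq]
    have key : (1 - A) *ᵥ
        (Sum.elim (B₁ *ᵥ (Y *ᵥ (B₂ *ᵥ Pi.single j 1)))
          (Sum.elim 0 (B₂ *ᵥ Pi.single j 1)) : Fin a ⊕ (Fin b ⊕ Fin c) → ℤ) =
        Pi.single (Sum.inr (Sum.inr j)) (1:ℤ) -
          Sum.elim (0 : Fin a → ℤ) (Sum.elim (Z *ᵥ (B₂ *ᵥ Pi.single j 1)) (0 : Fin c → ℤ)) := by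
      rw [h1A, fromBlocks_mulVec]
      simp only [Sum.elim_comp_inl, Sum.elim_comp_inr]
      rw [fromBlocks_mulVec]
      simp only [Sum.elim_comp_inl, Sum.elim_comp_inr, mulVec_zero, zero_mulVec,
        add_zero, zero_add, hinv₁, hinv₂, neg_mulVec, fromCols_mulVec_sumElim,
        add_neg_cancel, one_mulVec]
      ext (k | k | k) <;>
        simp [Pi.single_apply]
    rw [← key]; exact hmem _
  -- class of a middle-supported vector is a multiple of any middle class
  have hMidVec : ∀ (m : Fin b → ℤ) (i : Fin b),
      (Submodule.Quotient.mk (Sum.elim (0 : Fin a → ℤ) (Sum.elim m (0 : Fin c → ℤ)) : Fin a ⊕ (Fin b ⊕ Fin c) → ℤ) :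
        (Fin a ⊕ (Fin b ⊕ Fin c) → ℤ) ⧸ R) =
      (∑ i', m i') • Submodule.Quotient.mk (Pi.single (Sum.inr (Sum.inl i)) (1:ℤ)) := by
    intro m i
    have hv : (Sum.elim (0 : Fin a → ℤ) (Sum.elim m (0 : Fin c → ℤ)) : Fin a ⊕ (Fin b ⊕ Fin c) → ℤ) =
        ∑ i' : Fin b, m i' • (Pi.single (Sum.inr (Sum.inl i')) 1 : Fin a ⊕ (Fin b ⊕ Fin c) → ℤ) := by
      ext (k | k | k) <;>
        simp [Finset.sum_apply, Pi.single_apply]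
    rw [hv, ← Submodule.mkQ_apply, map_sum]
    rw [Finset.sum_smul]
    refine Finset.sum_congr rfl fun i' _ => ?_
    rw [LinearMap.map_smul, Submodule.mkQ_apply, hMid i' i]
  -- decomposition of any class into basis classes
  have hdecomp : ∀ v : Fin a ⊕ (Fin b ⊕ Fin c) → ℤ,
      (Submodule.Quotient.mk v : (Fin a ⊕ (Fin b ⊕ Fin c) → ℤ) ⧸ R) =
        ∑ k : Fin a ⊕ (Fin b ⊕ Fin c), v k • Submodule.Quotient.mk (Pi.single k (1:ℤ)) := by
    intro v
    conv_lhs => rw [← Finset.univ_sum_single v]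
    rw [← Submodule.mkQ_apply, map_sum]
    refine Finset.sum_congr rfl fun k _ => ?_
    have : (Pi.single k (v k) : Fin a ⊕ (Fin b ⊕ Fin c) → ℤ) = v k • Pi.single k 1 := by
      rw [← Pi.single_smul, smul_eq_mul, mul_one]
    rw [this, LinearMap.map_smul, Submodule.mkQ_apply]
  -- the linear functional detecting the middle coordinate
  set φ₃ : Fin c → ℤ := (((fun _ => (1:ℤ)) ᵥ* Z) ᵥ* B₂) with hφ₃
  set w : Fin a ⊕ (Fin b ⊕ Fin c) → ℤ := Sum.elim 0 (Sum.elim (fun _ => (1:ℤ)) φ₃) with hw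
  have honesP : (fun _ => (1:ℤ)) ᵥ* P = fun _ => (1:ℤ) := by
    funext j
    simp only [vecMul, dotProduct, hP, of_apply, one_mul]
    rw [Finset.sum_congr rfl (fun i _ => by
      rw [show ((if σ i = j then (1:ℤ) else 0) = if i = σ.symm j then 1 else 0) by
        simp [Equiv.apply_eq_iff_eq_symm_apply]])]
    simp
  have hwA : w ᵥ* (1 - A) = 0 := by
    rw [h1A, vecMul_fromBlocks]
    simp only [hw, Sum.elim_comp_inl, Sum.elim_comp_inr, zero_vecMul, vecMul_zero,
      zero_add, add_zero]
    rw [vecMul_fromBlocks]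
    simp only [Sum.elim_comp_inl, Sum.elim_comp_inr, vecMul_zero, zero_add, add_zero]
    have h1 : (fun _ => (1:ℤ)) ᵥ* (1 - P) = 0 := by
      rw [vecMul_sub, vecMul_one, honesP, sub_self]
    have h2 : (fun _ => (1:ℤ)) ᵥ* (-Z) + φ₃ ᵥ* (1 - N₂) = 0 := by
      rw [hφ₃, vecMul_vecMul, hB₂', vecMul_one, vecMul_neg, neg_add_cancel]
    ext (k | k | k) <;> simp [h1, h2]
  have hL : ∃ L : (Fin a ⊕ (Fin b ⊕ Fin c) → ℤ) →ₗ[ℤ] ℤ, ∀ v, L v = w ⬝ᵥ v :=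
    ⟨{ toFun := fun v => w ⬝ᵥ v
       map_add' := fun x y => by simp [dotProduct_add]
       map_smul' := fun r x => by
         simp only [RingHom.id_apply, smul_eq_mul, dotProduct, Pi.smul_apply,
           Finset.mul_sum]
         exact Finset.sum_congr rfl fun i _ => by ring }, fun v => rfl⟩
  obtain ⟨L, hLdef⟩ := hL
  have hRker : R ≤ LinearMap.ker L := by
    rintro _ ⟨v, rfl⟩
    rw [LinearMap.mem_ker, Matrix.mulVecLin_apply, hLdef, dotProduct_mulVec, hwA,
      zero_dotProduct]
  set q : ((Fin a ⊕ (Fin b ⊕ Fin c) → ℤ) ⧸ R) →ₗ[ℤ] ℤ := Submodule.liftQ R L hRker with hq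
  have hqval : ∀ i : Fin b,
      q (Submodule.Quotient.mk (Pi.single (Sum.inr (Sum.inl i)) (1:ℤ))) = 1 := by
    intro i
    rw [hq, ← Submodule.mkQ_apply]
    rw [Submodule.mkQ_apply, Submodule.liftQ_apply, hLdef, dotProduct_single, hw]
    simp
  refine ⟨hMid, fun i => ⟨?_, ?_⟩⟩
  · -- injectivity
    intro k k' h
    have h2 := congrArg q h
    simp only [LinearMap.map_smul, hqval i, smul_eq_mul, mul_one] at h2
    exact h2
  · -- surjectivity
    intro x
    obtain ⟨v, rfl⟩ := Submodule.Quotient.mk_surjective R x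
    have hsingle : ∀ k : Fin a ⊕ (Fin b ⊕ Fin c), ∃ t : ℤ,
        (Submodule.Quotient.mk (Pi.single k (1:ℤ)) : (Fin a ⊕ (Fin b ⊕ Fin c) → ℤ) ⧸ R) =
          t • Submodule.Quotient.mk (Pi.single (Sum.inr (Sum.inl i)) (1:ℤ)) := by
      rintro (j | j | j)
      · exact ⟨0, by rw [hTop j, zero_smul]⟩
      · exact ⟨1, by rw [one_smul]; exact hMid j i⟩
      · obtain ⟨m, hm⟩ := hBot j
        exact ⟨∑ i', m i', by rw [hm, hMidVec m i]⟩
    choose t ht using hsingle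
    refine ⟨∑ k : Fin a ⊕ (Fin b ⊕ Fin c), v k * t k, ?_⟩
    show (∑ k : Fin a ⊕ (Fin b ⊕ Fin c), v k * t k) •
        (Submodule.Quotient.mk (Pi.single (Sum.inr (Sum.inl i)) (1:ℤ)) :
          (Fin a ⊕ (Fin b ⊕ Fin c) → ℤ) ⧸ R) = Submodule.Quotient.mk v
    rw [hdecomp v, Finset.sum_smul]
    exact Finset.sum_congr rfl fun k _ => by rw [ht k, smul_smul]
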